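/- arXiv:1304.1864 — 4 statements merged into one kernel-verified Lean document; each statement's English description precedes it below -/
import Mathlib

section
/- If T is a real symmetric n×n matrix, ẑ a unit vector, and λ̂ = ẑ*Tẑ the Rayleigh quotient, then with r = Tẑ − λ̂ẑ and z a unit eigenvector for the eigenvalue λ nearest to λ̂ (assumed strictly nearest), one has ‖r‖ / spdiam(T) ≤ sin∠(ẑ, z), where spdiam(T) = λ_max − λ_min. -/
open scoped RealInnerProductSpace

section Aux
variable {n : ℕ}

lemma aux_isHermitian (T : Matrix (Fin n) (Fin n) ℝ) (hT : T.IsSymm) : T.IsHermitian := by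
  rwa [Matrix.IsHermitian, Matrix.conjTranspose_eq_transpose_of_trivial]

lemma aux_eigen_toEuclideanLin (T : Matrix (Fin n) (Fin n) ℝ) (hH : T.IsHermitian) (i : Fin n) :
    Matrix.toEuclideanLin T (hH.eigenvectorBasis i) = hH.eigenvalues i • hH.eigenvectorBasis i := by
  apply (WithLp.equiv 2 _).injective
  simpa using hH.mulVec_eigenvectorBasis i

lemma aux_comp (T : Matrix (Fin n) (Fin n) ℝ) (hH : T.IsHermitian)
    (v : EuclideanSpace ℝ (Fin n)) (μ : ℝ) (i : Fin n) :
    ⟪hH.eigenvectorBasis i, Matrix.toEuclideanLin T v - μ • v⟫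
      = (hH.eigenvalues i - μ) * ⟪hH.eigenvectorBasis i, v⟫ := by
  have hsym := (Matrix.isHermitian_iff_isSymmetric.mp hH)
  have h1 : ⟪hH.eigenvectorBasis i, Matrix.toEuclideanLin T v⟫
      = hH.eigenvalues i * ⟪hH.eigenvectorBasis i, v⟫ := by
    rw [← hsym (hH.eigenvectorBasis i) v, aux_eigen_toEuclideanLin T hH i,
      real_inner_smul_left]
  rw [inner_sub_right, h1, real_inner_smul_right]
  ring

lemma aux_norm_sq (v : EuclideanSpace ℝ (Fin n)) (B : OrthonormalBasis (Fin n) ℝ (EuclideanSpace ℝ (Fin n))) :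
    ‖v‖ ^ 2 = ∑ i, ⟪B i, v⟫ ^ 2 := by
  rw [← real_inner_self_eq_norm_sq, ← B.sum_inner_mul_inner]
  congr 1; ext i; rw [real_inner_comm v (B i)]; ring

lemma aux_bound (T : Matrix (Fin n) (Fin n) ℝ) (hH : T.IsHermitian)
    (lammin lammax : ℝ)
    (hb : ∀ i, lammin ≤ hH.eigenvalues i ∧ hH.eigenvalues i ≤ lammax)
    (hD : lammin ≤ lammax)
    (μ : ℝ) (hμ1 : lammin ≤ μ) (hμ2 : μ ≤ lammax)
    (v : EuclideanSpace ℝ (Fin n)) :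
    ‖Matrix.toEuclideanLin T v - μ • v‖ ≤ (lammax - lammin) * ‖v‖ := by
  set B := hH.eigenvectorBasis
  have hsq : ‖Matrix.toEuclideanLin T v - μ • v‖ ^ 2 ≤ ((lammax - lammin) * ‖v‖) ^ 2 := by
    rw [aux_norm_sq _ B, mul_pow, aux_norm_sq v B, Finset.mul_sum]
    apply Finset.sum_le_sum
    intro i _
    rw [aux_comp T hH v μ i, mul_pow]
    have h1 := (hb i).1
    have h2 := (hb i).2
    have : (hH.eigenvalues i - μ) ^ 2 ≤ (lammax - lammin) ^ 2 := by nlinarith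
    nlinarith [sq_nonneg (⟪B i, v⟫ : ℝ)]
  have h1 : (0:ℝ) ≤ (lammax - lammin) * ‖v‖ :=
    mul_nonneg (by linarith) (norm_nonneg _)
  nlinarith [norm_nonneg (Matrix.toEuclideanLin T v - μ • v)]

lemma aux_rayleigh (T : Matrix (Fin n) (Fin n) ℝ) (hH : T.IsHermitian)
    (lammin lammax : ℝ)
    (hb : ∀ i, lammin ≤ hH.eigenvalues i ∧ hH.eigenvalues i ≤ lammax)
    (v : EuclideanSpace ℝ (Fin n)) :
    lammin * ‖v‖ ^ 2 ≤ ⟪v, Matrix.toEuclideanLin T v⟫ ∧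
      ⟪v, Matrix.toEuclideanLin T v⟫ ≤ lammax * ‖v‖ ^ 2 := by
  set B := hH.eigenvectorBasis
  have key : ⟪v, Matrix.toEuclideanLin T v⟫ = ∑ i, hH.eigenvalues i * ⟪B i, v⟫ ^ 2 := by
    rw [← B.sum_inner_mul_inner v (Matrix.toEuclideanLin T v)]
    congr 1; ext i
    have := aux_comp T hH v 0 i
    simp only [zero_smul, sub_zero, zero_mul, sub_zero] at this
    rw [this, real_inner_comm v (B i)]; ring
  rw [key, aux_norm_sq v B, Finset.mul_sum, Finset.mul_sum]
  constructor <;> apply Finset.sum_le_sum <;> intro i _ <;>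
    nlinarith [sq_nonneg (⟪B i, v⟫ : ℝ), (hb i).1, (hb i).2]
end Aux

/-- Gap Theorem, second part (lower bound): with the Rayleigh quotient
`λ̂ = ⟨ẑ, Tẑ⟩`, one has `‖r‖ / spdiam(T) ≤ sin∠(ẑ, z)`. -/
theorem residual_div_spdiam_le_sin_angle
    (n : ℕ) (T : Matrix (Fin n) (Fin n) ℝ) (hT : T.IsSymm)
    (zhat z : EuclideanSpace ℝ (Fin n))
    (hzhat : ‖zhat‖ = 1) (hz : ‖z‖ = 1)
    (lam lammin lammax : ℝ)
    (heig : Matrix.toEuclideanLin T z = lam • z)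
    (hmin : ∃ v : EuclideanSpace ℝ (Fin n), v ≠ 0 ∧ Matrix.toEuclideanLin T v = lammin • v)
    (hmax : ∃ v : EuclideanSpace ℝ (Fin n), v ≠ 0 ∧ Matrix.toEuclideanLin T v = lammax • v)
    (hbounds : ∀ μ : ℝ, (∃ v : EuclideanSpace ℝ (Fin n), v ≠ 0 ∧ Matrix.toEuclideanLin T v = μ • v) →
      lammin ≤ μ ∧ μ ≤ lammax)
    (lamhat : ℝ) (hray : lamhat = ⟪zhat, (Matrix.toEuclideanLin T zhat : EuclideanSpace ℝ (Fin n))⟫)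
    (hclosest : ∀ μ : ℝ, (∃ v : EuclideanSpace ℝ (Fin n), v ≠ 0 ∧ Matrix.toEuclideanLin T v = μ • v) →
      μ ≠ lam → |lamhat - lam| < |lamhat - μ|)
    (r : EuclideanSpace ℝ (Fin n)) (hr : r = (Matrix.toEuclideanLin T zhat : EuclideanSpace ℝ (Fin n)) - lamhat • zhat) :
    ‖r‖ / (lammax - lammin) ≤ ‖zhat - ⟪zhat, z⟫ • z‖ := by
  have hH : T.IsHermitian := aux_isHermitian T hT
  have hsym := Matrix.isHermitian_iff_isSymmetric.mp hH
  set c : ℝ := ⟪zhat, z⟫ with hc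
  set w : EuclideanSpace ℝ (Fin n) := zhat - c • z with hw
  have hb : ∀ i, lammin ≤ hH.eigenvalues i ∧ hH.eigenvalues i ≤ lammax := fun i =>
    hbounds _ ⟨hH.eigenvectorBasis i, hH.eigenvectorBasis.orthonormal.ne_zero i,
      aux_eigen_toEuclideanLin T hH i⟩
  have hzne : z ≠ 0 := by
    intro h; rw [h, norm_zero] at hz; exact one_ne_zero hz.symm
  have hlam := hbounds lam ⟨z, hzne, heig⟩
  have hlamhat : lammin ≤ lamhat ∧ lamhat ≤ lammax := by
    have h := aux_rayleigh T hH lammin lammax hb zhat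
    rw [hzhat, one_pow, mul_one, mul_one, ← hray] at h
    exact h
  have hD : 0 ≤ lammax - lammin := by linarith [hlam.1, hlam.2]
  -- basic inner product facts
  have h1 : ⟪zhat, zhat⟫ = (1:ℝ) := by
    rw [real_inner_self_eq_norm_sq, hzhat]; norm_num
  have h2 : ⟪z, z⟫ = (1:ℝ) := by
    rw [real_inner_self_eq_norm_sq, hz]; norm_num
  have h3 : ⟪z, zhat⟫ = c := by rw [hc]; exact real_inner_comm zhat z
  have h5 : ⟪(Matrix.toEuclideanLin T zhat : EuclideanSpace ℝ (Fin n)), zhat⟫ = lamhat := by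
    rw [real_inner_comm, ← hray]
  have h6 : ⟪z, (Matrix.toEuclideanLin T zhat : EuclideanSpace ℝ (Fin n))⟫ = lam * c := by
    rw [← hsym z zhat, heig, real_inner_smul_left, h3]
  have h7 : ⟪(Matrix.toEuclideanLin T zhat : EuclideanSpace ℝ (Fin n)), z⟫ = lam * c := by
    rw [real_inner_comm, h6]
  have hLw : Matrix.toEuclideanLin T w
      = (Matrix.toEuclideanLin T zhat : EuclideanSpace ℝ (Fin n)) - (c * lam) • z := by
    rw [hw, map_sub, map_smul, heig, smul_smul]
  -- key identity
  have hid : ‖r‖ ^ 2 = ⟪Matrix.toEuclideanLin T w - lamhat • w,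
      Matrix.toEuclideanLin T w - lam • w⟫ := by
    rw [← real_inner_self_eq_norm_sq, hr, hLw, hw]
    simp only [inner_sub_left, inner_sub_right, real_inner_smul_left, real_inner_smul_right,
      h1, h2, h3, h5, h6, h7, ← hray, ← hc]
    ring
  -- bounds via Cauchy-Schwarz
  have hcs := real_inner_le_norm (Matrix.toEuclideanLin T w - lamhat • w)
      (Matrix.toEuclideanLin T w - lam • w)
  have hb1 := aux_bound T hH lammin lammax hb (by linarith) lamhat hlamhat.1 hlamhat.2 w
  have hb2 := aux_bound T hH lammin lammax hb (by linarith) lam hlam.1 hlam.2 w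
  have hkey : ‖r‖ ^ 2 ≤ ((lammax - lammin) * ‖w‖) ^ 2 := by
    calc ‖r‖ ^ 2 = _ := hid
      _ ≤ ‖Matrix.toEuclideanLin T w - lamhat • w‖ * ‖Matrix.toEuclideanLin T w - lam • w‖ := hcs
      _ ≤ ((lammax - lammin) * ‖w‖) * ((lammax - lammin) * ‖w‖) := by
          apply mul_le_mul hb1 hb2 (norm_nonneg _) (mul_nonneg hD (norm_nonneg _))
      _ = ((lammax - lammin) * ‖w‖) ^ 2 := by ring
  have hrle : ‖r‖ ≤ (lammax - lammin) * ‖w‖ := by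
    nlinarith [norm_nonneg r, mul_nonneg hD (norm_nonneg w)]
  rcases eq_or_lt_of_le hD with hD0 | hD0
  · rw [← hD0]
    simp [norm_nonneg]
  · rw [div_le_iff₀ hD0]
    linarith
end

section
/- If T is a real symmetric matrix, ẑ a unit vector with Rayleigh quotient λ̂ = ẑ*Tẑ, r = Tẑ − λ̂ẑ, and λ is the eigenvalue of T closest to λ̂ (with λ̂ strictly closer to λ than to any other eigenvalue), then |λ̂ − λ| ≤ min{ ‖r‖, ‖r‖² / gap(λ̂) }, where gap(λ̂) is the distance from λ̂ to the nearest eigenvalue different from λ. -/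
open scoped RealInnerProductSpace

/-- Gap Theorem, eigenvalue bound for the Rayleigh quotient:
`|λ̂ − λ| ≤ min { ‖r‖, ‖r‖² / gap(λ̂) }`. -/
theorem rayleigh_quotient_eigenvalue_bound
    (n : ℕ) (T : Matrix (Fin n) (Fin n) ℝ) (hT : T.IsSymm)
    (zhat : EuclideanSpace ℝ (Fin n)) (hzhat : ‖zhat‖ = 1)
    (lam lamhat gap : ℝ)
    (hray : lamhat = ⟪zhat, (Matrix.toEuclideanLin T zhat : EuclideanSpace ℝ (Fin n))⟫)
    (hlam : ∃ v : EuclideanSpace ℝ (Fin n), v ≠ 0 ∧ Matrix.toEuclideanLin T v = lam • v)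
    (hclosest : ∀ μ : ℝ, (∃ v : EuclideanSpace ℝ (Fin n), v ≠ 0 ∧ Matrix.toEuclideanLin T v = μ • v) →
      μ ≠ lam → |lamhat - lam| < |lamhat - μ|)
    (hgap : IsGLB {d : ℝ | ∃ μ : ℝ,
      (∃ v : EuclideanSpace ℝ (Fin n), v ≠ 0 ∧ Matrix.toEuclideanLin T v = μ • v) ∧ μ ≠ lam ∧
        d = |lamhat - μ|} gap)
    (hgappos : 0 < gap)
    (r : EuclideanSpace ℝ (Fin n)) (hr : r = (Matrix.toEuclideanLin T zhat : EuclideanSpace ℝ (Fin n)) - lamhat • zhat) :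
    |lamhat - lam| ≤ min ‖r‖ (‖r‖ ^ 2 / gap) := by
  set A : EuclideanSpace ℝ (Fin n) →ₗ[ℝ] EuclideanSpace ℝ (Fin n) := Matrix.toEuclideanLin T with hA
  have hAsym : A.IsSymmetric := by
    rw [hA, ← Matrix.isHermitian_iff_isSymmetric]
    rwa [Matrix.IsHermitian, Matrix.conjTranspose_eq_transpose_of_trivial]
  have hrank : Module.finrank ℝ (EuclideanSpace ℝ (Fin n)) = n := finrank_euclideanSpace_fin
  set b := hAsym.eigenvectorBasis hrank with hb
  set μ := hAsym.eigenvalues hrank with hμ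
  set c : Fin n → ℝ := fun i => ⟪b i, zhat⟫ with hc
  have heig : ∀ i, A (b i) = μ i • b i := fun i => by
    have := hAsym.apply_eigenvectorBasis hrank i
    exact_mod_cast this
  have hbne : ∀ i, b i ≠ 0 := fun i => by simpa using b.toBasis.ne_zero i
  have heigval : ∀ i, ∃ v : EuclideanSpace ℝ (Fin n), v ≠ 0 ∧ A v = μ i • v :=
    fun i => ⟨b i, hbne i, heig i⟩
  have hle : ∀ i, |lamhat - lam| ≤ |lamhat - μ i| := by
    intro i
    by_cases h : μ i = lam
    · rw [h]
    · exact le_of_lt (hclosest (μ i) (heigval i) h)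
  have hgaple : ∀ i, μ i ≠ lam → gap ≤ |lamhat - μ i| := by
    intro i h
    exact hgap.1 ⟨μ i, heigval i, h, rfl⟩
  -- coordinates
  have hsum1 : ∑ i, c i ^ 2 = 1 := by
    have key := b.sum_inner_mul_inner zhat zhat
    have h2 : (⟪zhat, zhat⟫ : ℝ) = 1 := by
      rw [real_inner_self_eq_norm_sq, hzhat]; norm_num
    rw [h2] at key
    rw [← key]
    refine Finset.sum_congr rfl fun i _ => ?_
    rw [real_inner_comm (b i) zhat]
    simp only [hc]; ring
  have hbAz : ∀ i, ⟪b i, A zhat⟫ = μ i * c i := by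
    intro i
    rw [← hAsym (b i) zhat, heig i, real_inner_smul_left]
  have hlamhat : lamhat = ∑ i, μ i * c i ^ 2 := by
    rw [hray]
    rw [← b.sum_inner_mul_inner zhat (A zhat)]
    refine Finset.sum_congr rfl fun i _ => ?_
    rw [real_inner_comm (b i) zhat, hbAz i]
    simp only [hc]; ring
  have hbr : ∀ i, ⟪b i, r⟫ = (μ i - lamhat) * c i := by
    intro i
    rw [hr, inner_sub_right, real_inner_smul_right, hbAz i]; ring
  have hrsq : ‖r‖ ^ 2 = ∑ i, ((μ i - lamhat) * c i) ^ 2 := by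
    have key := b.sum_inner_mul_inner r r
    rw [real_inner_self_eq_norm_sq] at key
    rw [← key]
    refine Finset.sum_congr rfl fun i _ => ?_
    rw [real_inner_comm (b i) r, hbr i]; ring
  have hrz : ⟪zhat, r⟫ = 0 := by
    rw [hr, inner_sub_right, real_inner_smul_right, real_inner_self_eq_norm_sq, hzhat, ← hray]
    ring
  set w : EuclideanSpace ℝ (Fin n) := A zhat - lam • zhat with hw
  have hbw : ∀ i, ⟪b i, w⟫ = (μ i - lam) * c i := by
    intro i
    rw [hw, inner_sub_right, real_inner_smul_right, hbAz i]; ring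
  have hrw : ⟪r, w⟫ = ‖r‖ ^ 2 := by
    have hwr : w = r + (lamhat - lam) • zhat := by
      rw [hw, hr]; module
    rw [hwr, inner_add_right, real_inner_smul_right, real_inner_comm zhat r,
      hrz, real_inner_self_eq_norm_sq]
    ring
  have hrw2 : ⟪r, w⟫ = ∑ i, (μ i - lamhat) * (μ i - lam) * c i ^ 2 := by
    rw [← b.sum_inner_mul_inner r w]
    refine Finset.sum_congr rfl fun i _ => ?_
    rw [real_inner_comm (b i) r, hbr i, hbw i]; ring
  have hdiff : lamhat - lam = ∑ i, (μ i - lam) * c i ^ 2 := by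
    have key : ∑ i, (μ i - lam) * c i ^ 2
        = (∑ i, μ i * c i ^ 2) - lam * ∑ i, c i ^ 2 := by
      rw [Finset.mul_sum, ← Finset.sum_sub_distrib]
      exact Finset.sum_congr rfl fun i _ => by ring
    rw [key, hsum1, ← hlamhat]; ring
  -- first bound
  have h1 : |lamhat - lam| ≤ ‖r‖ := by
    have hsq : |lamhat - lam| ^ 2 ≤ ‖r‖ ^ 2 := by
      calc |lamhat - lam| ^ 2 = ∑ i, c i ^ 2 * |lamhat - lam| ^ 2 := by
            rw [← Finset.sum_mul, hsum1, one_mul]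
        _ ≤ ∑ i, ((μ i - lamhat) * c i) ^ 2 := by
            apply Finset.sum_le_sum
            intro i _
            have h2 : |lamhat - lam| ^ 2 ≤ (μ i - lamhat) ^ 2 := by
              rw [← sq_abs (μ i - lamhat), abs_sub_comm (μ i) lamhat]
              exact pow_le_pow_left₀ (abs_nonneg _) (hle i) 2
            nlinarith [sq_nonneg (c i)]
        _ = ‖r‖ ^ 2 := hrsq.symm
    nlinarith [abs_nonneg (lamhat - lam), norm_nonneg r]
  -- second bound
  have h2 : |lamhat - lam| ≤ ‖r‖ ^ 2 / gap := by
    rw [le_div_iff₀ hgappos]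
    calc |lamhat - lam| * gap = gap * |∑ i, (μ i - lam) * c i ^ 2| := by
          rw [← hdiff]; ring
      _ ≤ gap * ∑ i, |(μ i - lam) * c i ^ 2| :=
          mul_le_mul_of_nonneg_left (Finset.abs_sum_le_sum_abs _ _) hgappos.le
      _ = ∑ i, gap * |μ i - lam| * c i ^ 2 := by
          rw [Finset.mul_sum]
          refine Finset.sum_congr rfl fun i _ => ?_
          rw [abs_mul, abs_of_nonneg (sq_nonneg (c i))]; ring
      _ ≤ ∑ i, (μ i - lamhat) * (μ i - lam) * c i ^ 2 := by
          apply Finset.sum_le_sum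
          intro i _
          by_cases h : μ i = lam
          · simp [h]
          · have hg := hgaple i h
            have hcl := hclosest (μ i) (heigval i) h
            have hsqlt : (lamhat - lam) ^ 2 < (lamhat - μ i) ^ 2 := by
              rw [← sq_abs (lamhat - lam), ← sq_abs (lamhat - μ i)]
              exact pow_lt_pow_left₀ hcl (abs_nonneg _) two_ne_zero
            have hsign : 0 ≤ (μ i - lamhat) * (μ i - lam) := by
              nlinarith [sq_nonneg (μ i - lam)]
            have heq : (μ i - lamhat) * (μ i - lam) = |lamhat - μ i| * |μ i - lam| := by
              rw [← abs_of_nonneg hsign, abs_mul, abs_sub_comm (μ i) lamhat]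
            rw [heq]
            have hm : gap * |μ i - lam| ≤ |lamhat - μ i| * |μ i - lam| :=
              mul_le_mul_of_nonneg_right hg (abs_nonneg _)
            nlinarith [sq_nonneg (c i)]
      _ = ⟪r, w⟫ := hrw2.symm
      _ = ‖r‖ ^ 2 := hrw
  exact le_min h1 h2
end

section
/- Let T be a real symmetric matrix with spectral decomposition having orthonormal eigenvectors z_i and eigenvalues λ_i, and let ẑ be a unit vector, λ the eigenvalue closest to λ̂ := ⟨ẑ,Tẑ⟩ with unit eigenvector z, gap(λ̂) the distance to the rest of the spectrum, and r := Tẑ − λ̂ẑ. If additionally λ is a simple eigenvalue, then the component of ẑ orthogonal to z has norm at most ‖r‖/gap(λ̂): ‖ẑ − ⟨ẑ,z⟩z‖ ≤ ‖r‖/gap(λ̂). -/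
open scoped RealInnerProductSpace

/-- For a simple eigenvalue `lam` nearest the Rayleigh quotient `λ̂`, the component
of `ẑ` orthogonal to the eigenvector `z` is bounded by `‖r‖ / gap(λ̂)`. -/
theorem orthogonal_component_bound_simple_eigenvalue
    (n : ℕ) (T : Matrix (Fin n) (Fin n) ℝ) (hT : T.IsSymm)
    (zhat z : EuclideanSpace ℝ (Fin n))
    (hzhat : ‖zhat‖ = 1) (hz : ‖z‖ = 1)
    (lam lamhat gap : ℝ)
    (heig : Matrix.toEuclideanLin T z = lam • z)
    (hsimple : ∀ v : EuclideanSpace ℝ (Fin n), Matrix.toEuclideanLin T v = lam • v → ∃ c : ℝ, v = c • z)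
    (hray : lamhat = ⟪zhat, (Matrix.toEuclideanLin T zhat : EuclideanSpace ℝ (Fin n))⟫)
    (hclosest : ∀ μ : ℝ, (∃ v : EuclideanSpace ℝ (Fin n), v ≠ 0 ∧ Matrix.toEuclideanLin T v = μ • v) →
      μ ≠ lam → |lamhat - lam| < |lamhat - μ|)
    (hgap : IsGLB {d : ℝ | ∃ μ : ℝ,
      (∃ v : EuclideanSpace ℝ (Fin n), v ≠ 0 ∧ Matrix.toEuclideanLin T v = μ • v) ∧ μ ≠ lam ∧
        d = |lamhat - μ|} gap)
    (hgappos : 0 < gap)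
    (r : EuclideanSpace ℝ (Fin n)) (hr : r = (Matrix.toEuclideanLin T zhat : EuclideanSpace ℝ (Fin n)) - lamhat • zhat) :
    ‖zhat - ⟪zhat, z⟫ • z‖ ≤ ‖r‖ / gap := by
  classical
  set A : EuclideanSpace ℝ (Fin n) →ₗ[ℝ] EuclideanSpace ℝ (Fin n) := Matrix.toEuclideanLin T with hA
  have hherm : T.IsHermitian := hT
  have hsym : A.IsSymmetric := Matrix.isHermitian_iff_isSymmetric.1 hherm
  have hn : Module.finrank ℝ (EuclideanSpace ℝ (Fin n)) = n := finrank_euclideanSpace_fin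
  set b := hsym.eigenvectorBasis hn with hb
  set μ := hsym.eigenvalues hn with hμ
  set c : ℝ := ⟪zhat, z⟫ with hc
  set w : EuclideanSpace ℝ (Fin n) := zhat - c • z with hw
  -- w ⊥ z
  have hzz : ⟪z, z⟫ = (1 : ℝ) := by
    rw [real_inner_self_eq_norm_sq, hz]; norm_num
  have hwz : ⟪z, w⟫ = 0 := by
    simp [hw, inner_sub_right, inner_smul_right, hzz, hz, hc, real_inner_comm z zhat]
  have hwz' : ⟪w, z⟫ = 0 := by rw [real_inner_comm]; exact hwz
  -- basic eigenvector facts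
  have hbi : ∀ i, A (b i) = μ i • b i := fun i =>
    (hsym.hasEigenvector_eigenvectorBasis hn i).apply_eq_smul
  have hbne : ∀ i, b i ≠ 0 := fun i => (hsym.hasEigenvector_eigenvectorBasis hn i).2
  -- coefficients of w along eigenvectors with eigenvalue lam vanish
  have hcoef : ∀ i, μ i = lam → ⟪b i, w⟫ = 0 := by
    intro i hi
    obtain ⟨d, hd⟩ := hsimple (b i) (by rw [← hi]; exact hbi i)
    rw [hd, inner_smul_left]
    simp [hwz]
  -- gap lower bound on eigenvalues ≠ lam
  have hgaple : ∀ i, μ i ≠ lam → gap ≤ |lamhat - μ i| := by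
    intro i hi
    exact hgap.1 ⟨μ i, ⟨b i, hbne i, hbi i⟩, hi, rfl⟩
  -- Parseval
  have parseval : ∀ v : EuclideanSpace ℝ (Fin n), ‖v‖ ^ 2 = ∑ i, ⟪b i, v⟫ ^ 2 := by
    intro v
    rw [← real_inner_self_eq_norm_sq, ← b.sum_inner_mul_inner v v]
    congr 1; ext i
    rw [real_inner_comm v (b i)]; ring
  set u : EuclideanSpace ℝ (Fin n) := A w - lamhat • w with hu
  -- coefficients of u
  have hucoef : ∀ i, ⟪b i, u⟫ = (μ i - lamhat) * ⟪b i, w⟫ := by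
    intro i
    rw [hu, inner_sub_right, inner_smul_right, ← hsym (b i) w, hbi i, inner_smul_left]
    simp only [starRingEnd_apply, star_trivial]
    ring
  -- gap * ‖w‖ ≤ ‖u‖
  have key : gap * ‖w‖ ≤ ‖u‖ := by
    have hsq : (gap * ‖w‖) ^ 2 ≤ ‖u‖ ^ 2 := by
      rw [mul_pow, parseval w, parseval u, Finset.mul_sum]
      apply Finset.sum_le_sum
      intro i _
      rw [hucoef i]
      by_cases hi : μ i = lam
      · rw [hcoef i hi]; simp
      · rw [mul_pow]
        apply mul_le_mul_of_nonneg_right _ (sq_nonneg _)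
        calc gap ^ 2 ≤ |lamhat - μ i| ^ 2 := by
              apply pow_le_pow_left₀ hgappos.le (hgaple i hi)
          _ = (μ i - lamhat) ^ 2 := by rw [sq_abs]; ring
    have h1 := Real.sqrt_le_sqrt hsq
    rwa [Real.sqrt_sq (mul_nonneg hgappos.le (norm_nonneg w)),
      Real.sqrt_sq (norm_nonneg u)] at h1
  -- u ⊥ z
  have huz : ⟪u, z⟫ = 0 := by
    rw [hu, inner_sub_left, inner_smul_left, hsym w z, heig, inner_smul_right, hwz']
    ring
  -- r = u + c (lam - lamhat) • z
  have hru : r = u + (c * (lam - lamhat)) • z := by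
    rw [hr, hu, hw]
    simp only [map_sub, map_smul, heig]
    module
  have hnorm : ‖u‖ ≤ ‖r‖ := by
    have : ‖r‖ ^ 2 = ‖u‖ ^ 2 + ‖(c * (lam - lamhat)) • z‖ ^ 2 := by
      rw [hru, norm_add_sq_real, inner_smul_right, huz]
      ring
    nlinarith [norm_nonneg r, norm_nonneg u, sq_nonneg ‖(c * (lam - lamhat)) • z‖]
  have hfin : gap * ‖w‖ ≤ ‖r‖ := le_trans key hnorm
  calc ‖zhat - ⟪zhat, z⟫ • z‖ = ‖w‖ := rfl
    _ ≤ ‖r‖ / gap := (le_div_iff₀ hgappos).2 (by linarith)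
end

section
/- Let T be symmetric with unit eigenvector z for eigenvalue λ, and let ẑ be a unit vector with sin∠(ẑ, z) ≤ θ. Then the Rayleigh quotient λ̂ = ⟨ẑ, Tẑ⟩ satisfies |λ̂ − λ| ≤ spdiam(T)·θ², where spdiam(T) = λ_max(T) − λ_min(T). -/
open scoped RealInnerProductSpace

lemma rayleigh_bound_aux (n : ℕ) (B : EuclideanSpace ℝ (Fin n) →ₗ[ℝ] EuclideanSpace ℝ (Fin n))
    (hB : B.IsSymmetric) (a b : ℝ)
    (hbounds : ∀ μ : ℝ, (∃ v : EuclideanSpace ℝ (Fin n), v ≠ 0 ∧ B v = μ • v) → a ≤ μ ∧ μ ≤ b)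
    (v : EuclideanSpace ℝ (Fin n)) :
    a * ‖v‖ ^ 2 ≤ ⟪v, B v⟫ ∧ ⟪v, B v⟫ ≤ b * ‖v‖ ^ 2 := by
  have hn : Module.finrank ℝ (EuclideanSpace ℝ (Fin n)) = n := finrank_euclideanSpace_fin
  set bas := hB.eigenvectorBasis hn
  have heigs : ∀ i, a ≤ hB.eigenvalues hn i ∧ hB.eigenvalues hn i ≤ b := by
    intro i
    refine hbounds _ ⟨bas i, ?_, ?_⟩
    · exact (hB.hasEigenvector_eigenvectorBasis hn i).2
    · exact_mod_cast hB.apply_eigenvectorBasis hn i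
  have h1 : ⟪v, B v⟫ = ∑ i, hB.eigenvalues hn i * (bas.repr v i) ^ 2 := by
    rw [← bas.repr.inner_map_map v (B v)]
    simp only [PiLp.inner_apply, RCLike.inner_apply, conj_trivial]
    refine Finset.sum_congr rfl fun i _ => ?_
    rw [hB.eigenvectorBasis_apply_self_apply hn v i, RCLike.ofReal_real_eq_id]
    simp only [id_eq]
    ring
  have h2 : ‖v‖ ^ 2 = ∑ i, (bas.repr v i) ^ 2 := by
    rw [← real_inner_self_eq_norm_sq, ← bas.repr.inner_map_map v v]
    simp only [PiLp.inner_apply, RCLike.inner_apply, conj_trivial, sq]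
  constructor
  · rw [h1, h2, Finset.mul_sum]
    exact Finset.sum_le_sum fun i _ => mul_le_mul_of_nonneg_right (heigs i).1 (sq_nonneg _)
  · rw [h1, h2, Finset.mul_sum]
    exact Finset.sum_le_sum fun i _ => mul_le_mul_of_nonneg_right (heigs i).2 (sq_nonneg _)

/-- Quadratic accuracy of the Rayleigh quotient: `|λ̂ − λ| ≤ spdiam(T)·θ²`. -/
theorem rayleigh_quotient_quadratic_accuracy
    (n : ℕ) (T : Matrix (Fin n) (Fin n) ℝ) (hT : T.IsSymm)
    (z zhat : EuclideanSpace ℝ (Fin n)) (hz : ‖z‖ = 1) (hzhat : ‖zhat‖ = 1)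
    (lam lammin lammax θ : ℝ) (hθ : 0 ≤ θ)
    (heig : Matrix.toEuclideanLin T z = lam • z)
    (hmin : ∃ v : EuclideanSpace ℝ (Fin n), v ≠ 0 ∧ Matrix.toEuclideanLin T v = lammin • v)
    (hmax : ∃ v : EuclideanSpace ℝ (Fin n), v ≠ 0 ∧ Matrix.toEuclideanLin T v = lammax • v)
    (hbounds : ∀ μ : ℝ, (∃ v : EuclideanSpace ℝ (Fin n), v ≠ 0 ∧ Matrix.toEuclideanLin T v = μ • v) →
      lammin ≤ μ ∧ μ ≤ lammax)
    (hsin : ‖zhat - ⟪zhat, z⟫ • z‖ ≤ θ)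
    (lamhat : ℝ) (hray : lamhat = ⟪zhat, (Matrix.toEuclideanLin T zhat : EuclideanSpace ℝ (Fin n))⟫) :
    |lamhat - lam| ≤ (lammax - lammin) * θ ^ 2 := by
  set B := Matrix.toEuclideanLin T with hBdef
  have hH : T.IsHermitian := by
    rwa [Matrix.IsHermitian, Matrix.conjTranspose_eq_transpose_of_trivial]
  have hB : B.IsSymmetric := Matrix.isHermitian_iff_isSymmetric.mp hH
  set c : ℝ := ⟪zhat, z⟫ with hc
  set w : EuclideanSpace ℝ (Fin n) := zhat - c • z with hw
  have hzz : ⟪z, z⟫ = (1 : ℝ) := by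
    rw [real_inner_self_eq_norm_sq, hz]; norm_num
  have hzw : ⟪z, w⟫ = 0 := by
    rw [hw, inner_sub_right, real_inner_smul_right, hzz, hc]
    linear_combination real_inner_comm zhat z
  have hwz : ⟪w, z⟫ = 0 := by rw [real_inner_comm]; exact hzw
  have hzhat' : zhat = c • z + w := by rw [hw]; abel
  -- c² + ‖w‖² = 1
  have hnorm : c ^ 2 + ‖w‖ ^ 2 = 1 := by
    have : ‖zhat‖ ^ 2 = c ^ 2 + ‖w‖ ^ 2 := by
      rw [← real_inner_self_eq_norm_sq, hzhat', inner_add_add_self]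
      simp only [real_inner_smul_left, real_inner_smul_right, hzz, hzw, hwz,
        real_inner_self_eq_norm_sq]
      rw [norm_smul, hz, mul_one, Real.norm_eq_abs, sq_abs]
      ring
    rw [← this, hzhat]; norm_num
  -- lamhat = c² lam + ⟪w, B w⟫
  have hzBw : ⟪z, B w⟫ = 0 := by
    rw [← hB z w, heig, real_inner_smul_left, hzw, mul_zero]
  have hwBz : ⟪w, (B z : EuclideanSpace ℝ (Fin n))⟫ = 0 := by
    rw [heig, real_inner_smul_right, hwz, mul_zero]
  have hkey : lamhat = c ^ 2 * lam + ⟪w, B w⟫ := by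
    rw [hray, hzhat', map_add, map_smul, heig]
    simp only [inner_add_left, inner_add_right, real_inner_smul_left, real_inner_smul_right,
      hzz, hzw, hwz, hzBw, hwBz]
    ring
  -- bounds
  have hz0 : z ≠ 0 := fun h => by simp [h] at hz
  have hlam := hbounds lam ⟨z, hz0, heig⟩
  have hwb := rayleigh_bound_aux n B hB lammin lammax hbounds w
  have hwθ : ‖w‖ ^ 2 ≤ θ ^ 2 := pow_le_pow_left₀ (norm_nonneg w) hsin 2
  have hdiff : lamhat - lam = ⟪w, B w⟫ - lam * ‖w‖ ^ 2 := by
    rw [hkey]; linear_combination lam * hnorm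
  have hd0 : (0:ℝ) ≤ lammax - lammin := by linarith [hlam.1, hlam.2]
  have h5 : (lammax - lammin) * ‖w‖ ^ 2 ≤ (lammax - lammin) * θ ^ 2 :=
    mul_le_mul_of_nonneg_left hwθ hd0
  rw [abs_le]
  constructor
  · rw [hdiff]
    nlinarith [hwb.1, mul_nonneg (sub_nonneg.2 hlam.2) (sq_nonneg ‖w‖), h5]
  · rw [hdiff]
    nlinarith [hwb.2, mul_nonneg (sub_nonneg.2 hlam.1) (sq_nonneg ‖w‖), h5]
end
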